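/- (Non-resonance on dyadic scales) Let d ≥ 1 and let h be the dyadic–triadic potential on ℤ^d. For every integer M ≥ 1, every a ∈ ℤ^d, and every function σ : ℤ^d → {−1,0,1} that vanishes outside the shifted box a + Λ_{2^M} and is not identically zero, |∑_{n ∈ a+Λ_{2^M}} σ_n·h_n| ≥ 3^{−2^{dM+1}}. -/

import Mathlib

/-- `bdig k n` is the `k`-th binary digit of the integer `n` (floor division). -/
def bdig (k : ℕ) (n : ℤ) : ℤ := (n / 2 ^ k) % 2

/-- `pm d m n = (∑_{k=0}^{m-1} 2^{dk}(1 + ∑_{j=1}^d 2^{j-1} b_k(n_j))) - 1`. -/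
def pm (d m : ℕ) (n : Fin d → ℤ) : ℤ :=
  (∑ k ∈ Finset.range m, 2 ^ (d * k) * (1 + ∑ j : Fin d, 2 ^ (j : ℕ) * bdig k (n j))) - 1

/-- The dyadic–triadic potential `h_n = ∑_{m=1}^∞ 3^{−p_m(n)}`. -/
noncomputable def hpot (d : ℕ) (n : Fin d → ℤ) : ℝ :=
  ∑' m : ℕ, (3 : ℝ) ^ (-(pm d (m + 1) n))

lemma bdig_nonneg (k : ℕ) (n : ℤ) : 0 ≤ bdig k n :=
  Int.emod_nonneg _ (by norm_num)

lemma bdig_le_one (k : ℕ) (n : ℤ) : bdig k n ≤ 1 := by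
  have := Int.emod_lt_of_pos (n / 2 ^ k) (show (0:ℤ) < 2 by norm_num)
  unfold bdig; omega

lemma sum_two_pow (d : ℕ) : ∑ j ∈ Finset.range d, (2:ℤ)^j = 2^d - 1 := by
  induction d with
  | zero => simp
  | succ d ih => rw [Finset.sum_range_succ, ih]; ring

def csum (d : ℕ) (k : ℕ) (n : Fin d → ℤ) : ℤ := ∑ j : Fin d, 2 ^ (j : ℕ) * bdig k (n j)

lemma csum_nonneg (d k : ℕ) (n : Fin d → ℤ) : 0 ≤ csum d k n :=
  Finset.sum_nonneg fun j _ => mul_nonneg (by positivity) (bdig_nonneg _ _)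

lemma csum_le (d k : ℕ) (n : Fin d → ℤ) : csum d k n ≤ 2^d - 1 := by
  calc csum d k n ≤ ∑ j : Fin d, 2 ^ (j:ℕ) := by
        apply Finset.sum_le_sum
        intro j _
        have h1 := bdig_le_one k (n j)
        nlinarith [show (0:ℤ) < 2 ^ (j:ℕ) by positivity]
    _ = ∑ j ∈ Finset.range d, (2:ℤ)^j := Fin.sum_univ_eq_sum_range _ d
    _ = 2^d - 1 := sum_two_pow d

def g (d m : ℕ) : ℤ := ∑ k ∈ Finset.range m, 2^(d*k)

lemma pm_add_one (d m : ℕ) (n : Fin d → ℤ) :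
    pm d m n + 1 = ∑ k ∈ Finset.range m, 2 ^ (d * k) * (1 + csum d k n) := by
  simp [pm, csum]

lemma g_le_pm (d m : ℕ) (n : Fin d → ℤ) : g d m ≤ pm d m n + 1 := by
  rw [pm_add_one]
  apply Finset.sum_le_sum
  intro k _
  have := csum_nonneg d k n
  nlinarith [show (0:ℤ) < 2 ^ (d*k) by positivity]

lemma pm_le (d m : ℕ) (n : Fin d → ℤ) : pm d m n + 1 ≤ 2^d * g d m := by
  rw [pm_add_one, g, Finset.mul_sum]
  apply Finset.sum_le_sum
  intro k _
  have := csum_le d k n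
  have h2 : (0:ℤ) < 2 ^ (d*k) := by positivity
  nlinarith

lemma g_succ (d m : ℕ) : g d (m+1) = 2^d * g d m + 1 := by
  rw [g, g, Finset.sum_range_succ', Finset.mul_sum]
  simp only [mul_zero, pow_zero]
  congr 1
  apply Finset.sum_congr rfl
  intro k _
  rw [mul_add_one d k, pow_add]
  ring

lemma g_mono (d : ℕ) {m m' : ℕ} (h : m ≤ m') : g d m ≤ g d m' := by
  apply Finset.sum_le_sum_of_subset_of_nonneg (Finset.range_subset_range.2 h)
  intros; positivity

lemma le_g (d m : ℕ) : (m : ℤ) ≤ g d m := by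
  calc (m:ℤ) = ∑ k ∈ Finset.range m, 1 := by simp
    _ ≤ g d m := Finset.sum_le_sum fun k _ => one_le_pow₀ (by norm_num)

lemma pm_lt_pm (d : ℕ) {m m' : ℕ} (h : m < m') (n n' : Fin d → ℤ) :
    pm d m n < pm d m' n' := by
  have h1 := pm_le d m n
  have h2 := g_le_pm d m' n'
  have h3 := g_mono d (show m + 1 ≤ m' from h)
  have h4 := g_succ d m
  omega

lemma pm_ge (d m : ℕ) (n : Fin d → ℤ) : (m : ℤ) ≤ pm d (m+1) n := by
  have h1 := g_le_pm d (m+1) n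
  have h2 := le_g d (m+1)
  push_cast at h2 ⊢
  omega
-- appended after l1 content
lemma digits_inj (β : ℤ) (hβ : 0 < β) : ∀ (m : ℕ) (D E : ℕ → ℤ),
    (∀ k, |D k - E k| < β) →
    (∑ k ∈ Finset.range m, β^k * D k = ∑ k ∈ Finset.range m, β^k * E k) →
    ∀ k < m, D k = E k := by
  intro m
  induction m with
  | zero => intro D E _ _ k hk; omega
  | succ m ih =>
    intro D E hDE h k hk
    rw [Finset.sum_range_succ', Finset.sum_range_succ'] at h
    simp only [pow_zero, one_mul] at h
    have hfac : ∀ (F : ℕ → ℤ), ∑ k ∈ Finset.range m, β^(k+1) * F (k+1)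
        = β * ∑ k ∈ Finset.range m, β^k * F (k+1) := by
      intro F
      rw [Finset.mul_sum]
      apply Finset.sum_congr rfl
      intro i _
      ring
    rw [hfac D, hfac E] at h
    have hdvd : β ∣ (D 0 - E 0) := by
      refine ⟨(∑ k ∈ Finset.range m, β^k * E (k+1)) - (∑ k ∈ Finset.range m, β^k * D (k+1)), ?_⟩
      linarith [h]
    have h0 : D 0 = E 0 := by
      have := Int.eq_zero_of_abs_lt_dvd hdvd (hDE 0)
      omega
    have hAB : ∑ k ∈ Finset.range m, β^k * D (k+1) = ∑ k ∈ Finset.range m, β^k * E (k+1) := by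
      have hβne : β ≠ 0 := ne_of_gt hβ
      have : β * ∑ k ∈ Finset.range m, β^k * D (k+1) = β * ∑ k ∈ Finset.range m, β^k * E (k+1) := by
        omega
      exact mul_left_cancel₀ hβne this
    rcases k with _ | k
    · exact h0
    · exact ih (fun i => D (i+1)) (fun i => E (i+1)) (fun i => hDE (i+1)) hAB k (by omega)

lemma csum_eq_of_pm_eq {d : ℕ} {m : ℕ} {n n' : Fin d → ℤ}
    (h : pm d m n = pm d m n') : ∀ k < m, csum d k n = csum d k n' := by
  have e1 := pm_add_one d m n
  have e2 := pm_add_one d m n'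
  simp only [pow_mul] at e1 e2
  have h' : ∑ k ∈ Finset.range m, ((2:ℤ)^d)^k * (1 + csum d k n)
      = ∑ k ∈ Finset.range m, ((2:ℤ)^d)^k * (1 + csum d k n') := by
    linarith [e1, e2, h]
  intro k hk
  have := digits_inj ((2:ℤ)^d) (by positivity) m
    (fun k => 1 + csum d k n) (fun k => 1 + csum d k n')
    (fun k => by
      have a2 := csum_le d k n
      have a3 := csum_nonneg d k n'
      have a1 := csum_nonneg d k n
      have a4 := csum_le d k n'
      show |(1 + csum d k n) - (1 + csum d k n')| < 2^d
      rw [abs_lt]; constructor <;> linarith)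
    h' k hk
  simpa using this

lemma bdig_eq_of_csum_eq {d : ℕ} {k : ℕ} {n n' : Fin d → ℤ}
    (h : csum d k n = csum d k n') : ∀ j : Fin d, bdig k (n j) = bdig k (n' j) := by
  have conv : ∀ (x : Fin d → ℤ), csum d k x
      = ∑ i ∈ Finset.range d, (2:ℤ)^i * (fun i => if h : i < d then bdig k (x ⟨i, h⟩) else 0) i := by
    intro x
    rw [csum, ← Fin.sum_univ_eq_sum_range (fun i => (2:ℤ)^i * (fun i => if h : i < d then bdig k (x ⟨i, h⟩) else 0) i) d]
    apply Finset.sum_congr rfl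
    intro j _
    simp
  intro j
  have h' := digits_inj 2 (by norm_num) d
    (fun i => if h : i < d then bdig k (n ⟨i, h⟩) else 0)
    (fun i => if h : i < d then bdig k (n' ⟨i, h⟩) else 0)
    (fun i => by
      by_cases hi : i < d <;> simp [hi]
      · have := bdig_nonneg k (n ⟨i, hi⟩); have := bdig_le_one k (n ⟨i, hi⟩)
        have := bdig_nonneg k (n' ⟨i, hi⟩); have := bdig_le_one k (n' ⟨i, hi⟩)
        rw [abs_le]; omega)
    (by rw [← conv n, ← conv n', h]) (j : ℕ) j.isLt
  simpa [j.isLt] using h'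

lemma emod_two_pow (x : ℤ) : ∀ m : ℕ, x % 2^m = ∑ k ∈ Finset.range m, 2^k * bdig k x := by
  intro m
  induction m with
  | zero => simp
  | succ m ih =>
    rw [Finset.sum_range_succ, ← ih]
    set q := x / 2^m with hq
    set r := x % 2^m with hr
    have hx : x = 2^m * q + r := by rw [hq, hr]; exact (Int.mul_ediv_add_emod x (2^m)).symm
    have hpm : (0:ℤ) < 2^m := by positivity
    have hr0 : 0 ≤ r := Int.emod_nonneg _ (by positivity)
    have hr1 : r < 2^m := Int.emod_lt_of_pos _ hpm
    have hb : bdig m x = q % 2 := rfl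
    have hq2 : q = 2 * (q / 2) + q % 2 := by omega
    have hqb0 : 0 ≤ q % 2 := Int.emod_nonneg _ (by norm_num)
    have hqb1 : q % 2 < 2 := Int.emod_lt_of_pos _ (by norm_num)
    have hx2 : x = (2^m * (q%2) + r) + 2^(m+1) * (q / 2) := by
      rw [hx, pow_succ]; nlinarith [hq2]
    have h1 : (0:ℤ) ≤ 2^m * (q%2) + r := by nlinarith
    have h2 : 2^m * (q%2) + r < 2^(m+1) := by rw [pow_succ]; nlinarith
    rw [hb, hx2, Int.add_mul_emod_self_left, Int.emod_eq_of_lt h1 h2]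
    ring
lemma pm_inj {d M m : ℕ} (hm : M ≤ m) (a : Fin d → ℤ) {x y : Fin d → ℤ}
    (hx : ∀ j, a j ≤ x j ∧ x j < a j + 2^M) (hy : ∀ j, a j ≤ y j ∧ y j < a j + 2^M)
    (h : pm d m x = pm d m y) : x = y := by
  have hcs := csum_eq_of_pm_eq h
  funext j
  have hb : ∀ k < m, bdig k (x j) = bdig k (y j) := fun k hk =>
    bdig_eq_of_csum_eq (hcs k hk) j
  have hmod : x j % 2^m = y j % 2^m := by
    rw [emod_two_pow (x j) m, emod_two_pow (y j) m]
    exact Finset.sum_congr rfl fun k hk => by rw [hb k (Finset.mem_range.1 hk)]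
  have hdvd : (2:ℤ)^m ∣ (y j - x j) := Int.ModEq.dvd hmod
  have hM : (2:ℤ)^M ≤ 2^m := pow_le_pow_right₀ (by norm_num) hm
  have h1 := (hx j).1; have h2 := (hx j).2
  have h3 := (hy j).1; have h4 := (hy j).2
  have := Int.eq_zero_of_abs_lt_dvd hdvd (by rw [abs_lt]; constructor <;> linarith)
  omega

lemma pm_add_le (d m' : ℕ) (n : Fin d → ℤ) : ∀ m : ℕ, pm d m' n + m ≤ pm d (m' + m) n := by
  intro m
  induction m with
  | zero => simp
  | succ m ih =>
    have := pm_lt_pm d (show m' + m < m' + (m+1) by omega) n n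
    push_cast
    push_cast at ih
    omega

lemma zpow3_le {p q : ℤ} (h : p ≤ q) : (3:ℝ)^(-q) ≤ (3:ℝ)^(-p) :=
  zpow_le_zpow_right₀ (by norm_num) (by omega)

lemma zpow3_neg_nat (m : ℕ) : (3:ℝ)^(-(m:ℤ)) = (1/3:ℝ)^m := by
  rw [zpow_neg, zpow_natCast, one_div, inv_pow]

lemma summable_hpot_term (d : ℕ) (n : Fin d → ℤ) :
    Summable (fun m : ℕ => (3:ℝ)^(-(pm d (m+1) n))) := by
  apply Summable.of_nonneg_of_le (fun m => by positivity)
    (fun m => ?_) (summable_geometric_of_lt_one (by norm_num) (show (1/3:ℝ) < 1 by norm_num))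
  rw [← zpow3_neg_nat]
  exact zpow3_le (pm_ge d m n)
lemma g_le_pow (d : ℕ) (hd : 1 ≤ d) : ∀ M : ℕ, 1 ≤ M → g d (M+1) ≤ 2^(d*M+1) := by
  intro M
  induction M with
  | zero => omega
  | succ M ih =>
    intro _
    rcases Nat.eq_zero_or_pos M with hM0 | hM1
    · subst hM0
      rw [g, Finset.sum_range_succ, Finset.sum_range_one]
      have h1 : (1:ℤ) ≤ 2^d := one_le_pow₀ (by norm_num)
      have h2 : (2:ℤ)^(d*1+1) = 2 * 2^d := by rw [pow_succ, mul_one, mul_comm]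
      simp only [Nat.mul_zero, Nat.mul_one, pow_zero]
      rw [h2]; nlinarith
    · have := ih hM1
      rw [g, Finset.sum_range_succ, ← g]
      have h1 : (2:ℤ)^(d*M+1) ≤ 2^(d*M+d) := pow_le_pow_right₀ (by norm_num) (by omega)
      have h2 : (2:ℤ)^(d*(M+1)) = 2^(d*M+d) := by ring_nf
      have h3 : (2:ℤ)^(d*(M+1)+1) = 2^(d*M+d) + 2^(d*M+d) := by
        rw [pow_succ]; ring_nf
      omega

/-- **non-resonance on dyadic scales.** For `d ≥ 1`, `M ≥ 1`, any
`a ∈ ℤ^d` and any `σ : ℤ^d → {−1,0,1}` supported in the shifted box `a + Λ_{2^M}` and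
not identically zero, `|∑_n σ_n h_n| ≥ 3^{−2^{dM+1}}`. -/
theorem stmt_10 (d : ℕ) (hd : 1 ≤ d) (M : ℕ) (hM : 1 ≤ M) (a : Fin d → ℤ)
    (σ : (Fin d → ℤ) → ℤ)
    (hσval : ∀ n, σ n = -1 ∨ σ n = 0 ∨ σ n = 1)
    (hσsupp : ∀ n, ¬ (∀ j, a j ≤ n j ∧ n j < a j + 2 ^ M) → σ n = 0)
    (hσne : ∃ n, σ n ≠ 0) :
    (3 : ℝ) ^ (-(2 ^ (d * M + 1) : ℤ)) ≤ |∑' n : Fin d → ℤ, (σ n : ℝ) * hpot d n| := by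
  classical
  set B : Finset (Fin d → ℤ) := Fintype.piFinset (fun j => Finset.Ico (a j) (a j + 2^M)) with hB
  have hmemB : ∀ n : Fin d → ℤ, n ∈ B ↔ ∀ j, a j ≤ n j ∧ n j < a j + 2^M := by
    intro n; simp [hB, Fintype.mem_piFinset, Finset.mem_Ico]
  have hout : ∀ n ∉ B, σ n = 0 := fun n hn => hσsupp n (fun hc => hn ((hmemB n).2 hc))
  set F := B.filter (fun n => σ n ≠ 0) with hF
  obtain ⟨n0, hn0⟩ := hσne
  have hn0B : n0 ∈ B := by by_contra hc; exact hn0 (hout n0 hc)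
  have hFne : F.Nonempty := ⟨n0, Finset.mem_filter.2 ⟨hn0B, hn0⟩⟩
  obtain ⟨nstar, hnstarF, hmax⟩ := F.exists_max_image (fun n => pm d M n) hFne
  have hnstarB : nstar ∈ B := (Finset.mem_filter.1 hnstarF).1
  have hσstar : σ nstar ≠ 0 := (Finset.mem_filter.1 hnstarF).2
  set p1 := pm d M nstar with hp1
  -- head and tail
  set Hd : (Fin d → ℤ) → ℝ := fun n => ∑ m ∈ Finset.range M, (3:ℝ)^(-(pm d (m+1) n)) with hHd
  set T : (Fin d → ℤ) → ℝ := fun n => ∑' m : ℕ, (3:ℝ)^(-(pm d (m+M+1) n)) with hT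
  have hsplit : ∀ n, hpot d n = Hd n + T n := by
    intro n
    rw [hpot, ← Summable.sum_add_tsum_nat_add M (summable_hpot_term d n)]
  have hS : ∑' n : Fin d → ℤ, (σ n : ℝ) * hpot d n = ∑ n ∈ B, (σ n : ℝ) * hpot d n :=
    tsum_eq_sum (fun n hn => by rw [hout n hn]; simp)
  set A : ℝ := ∑ n ∈ F, (σ n : ℝ) * Hd n with hA
  set E : ℝ := ∑ n ∈ B, (σ n : ℝ) * T n with hE
  have hSAE : ∑' n : Fin d → ℤ, (σ n : ℝ) * hpot d n = A + E := by
    rw [hS]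
    have : ∑ n ∈ B, (σ n : ℝ) * hpot d n
        = ∑ n ∈ B, ((σ n : ℝ) * Hd n + (σ n : ℝ) * T n) := by
      apply Finset.sum_congr rfl; intro n _; rw [hsplit n]; ring
    rw [this, Finset.sum_add_distrib]
    congr 1
    rw [hA, hF]
    exact (Finset.sum_filter_of_ne (fun n _ h => by
      intro hσ0; apply h; rw [hσ0]; simp)).symm
  -- exponent bookkeeping
  have hleM : ∀ n ∈ F, ∀ m < M, pm d (m+1) n ≤ p1 := by
    intro n hn m hm
    rcases Nat.lt_or_ge (m+1) M with h | h
    · exact le_of_lt (pm_lt_pm d h n nstar)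
    · have hmM : m + 1 = M := by omega
      rw [hmM]; exact hmax n hn
  have hinjM : ∀ n ∈ B, ∀ n' ∈ B, pm d M n = pm d M n' → n = n' := by
    intro n hn n' hn' h
    exact pm_inj le_rfl a ((hmemB n).1 hn) ((hmemB n').1 hn') h
  have hltM : ∀ n ∈ F, n ≠ nstar → ∀ m < M, pm d (m+1) n < p1 := by
    intro n hn hne m hm
    rcases Nat.lt_or_ge (m+1) M with h | h
    · exact pm_lt_pm d h n nstar
    · have hmM : m + 1 = M := by omega
      rw [hmM]
      have hle := hmax n hn
      have hne2 : pm d M n ≠ p1 := fun hc =>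
        hne (hinjM n (Finset.mem_filter.1 hn).1 nstar hnstarB hc)
      omega
  -- the integer c
  set e : (Fin d → ℤ) → ℕ → ℕ := fun n m => (p1 - pm d (m+1) n).toNat with he
  set t : (Fin d → ℤ) → ℤ := fun n => ∑ m ∈ Finset.range M, σ n * 3^(e n m) with ht
  set c : ℤ := ∑ n ∈ F, t n with hc
  have hAc : A = (3:ℝ)^(-p1) * (c : ℝ) := by
    rw [hA, hc, ht]
    push_cast
    rw [Finset.mul_sum]
    apply Finset.sum_congr rfl
    intro n hn
    rw [hHd]
    simp only []
    rw [Finset.mul_sum, Finset.mul_sum]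
    apply Finset.sum_congr rfl
    intro m hm
    have hle' : pm d (m+1) n ≤ p1 := hleM n hn m (Finset.mem_range.1 hm)
    have het : ((e n m : ℤ)) = p1 - pm d (m+1) n := by
      rw [he]; exact Int.toNat_of_nonneg (by omega)
    have h3 : (3:ℝ)^(-p1) * (3:ℝ)^((e n m : ℤ)) = (3:ℝ)^(-(pm d (m+1) n)) := by
      rw [het, ← zpow_add₀ (by norm_num : (3:ℝ) ≠ 0)]
      congr 1; ring
    rw [← zpow_natCast (3:ℝ) (e n m), ← h3]
    ring
  have hcdvd : (3:ℤ) ∣ c - σ nstar := by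
    rw [hc, ← Finset.add_sum_erase F t hnstarF]
    have h1 : (3:ℤ) ∣ ∑ n ∈ F.erase nstar, t n := by
      apply Finset.dvd_sum
      intro n hn
      rw [ht]
      apply Finset.dvd_sum
      intro m hm
      have hlt := hltM n (Finset.mem_of_mem_erase hn) (Finset.ne_of_mem_erase hn) m
        (Finset.mem_range.1 hm)
      have hee : e n m ≠ 0 := by
        rw [he]; simp only []; omega
      exact dvd_mul_of_dvd_right (dvd_pow_self 3 hee) _
    have h2 : (3:ℤ) ∣ t nstar - σ nstar := by
      obtain ⟨M', rfl⟩ : ∃ M', M = M' + 1 := ⟨M - 1, by omega⟩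
      rw [ht]
      simp only []
      rw [Finset.sum_range_succ]
      have he0 : e nstar M' = 0 := by
        rw [he]; simp only [hp1]; omega
      rw [he0]
      have h3 : (3:ℤ) ∣ ∑ m ∈ Finset.range M', σ nstar * 3^(e nstar m) := by
        apply Finset.dvd_sum
        intro m hm
        have hlt : pm d (m+1) nstar < p1 := pm_lt_pm d (by
          have := Finset.mem_range.1 hm; omega) nstar nstar
        have hee : e nstar m ≠ 0 := by rw [he]; simp only []; omega
        exact dvd_mul_of_dvd_right (dvd_pow_self 3 hee) _
      simpa using h3
    omega
  have hcne : c ≠ 0 := by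
    intro hc0
    rw [hc0] at hcdvd
    rcases hcdvd with ⟨k, hk⟩
    rcases hσval nstar with h | h | h <;> omega
  have hcabs : (1:ℝ) ≤ |(c:ℝ)| := by
    have : (1:ℤ) ≤ |c| := Int.one_le_abs hcne
    calc (1:ℝ) ≤ ((|c| : ℤ) : ℝ) := by exact_mod_cast this
      _ = |(c:ℝ)| := by push_cast; rfl
  have hAabs : (3:ℝ)^(-p1) ≤ |A| := by
    rw [hAc, abs_mul, abs_of_pos (show (0:ℝ) < (3:ℝ)^(-p1) by positivity)]
    nlinarith [show (0:ℝ) < (3:ℝ)^(-p1) by positivity]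
  -- tail bound
  set q : (Fin d → ℤ) → ℤ := fun n => pm d (M+1) n with hq
  set x : ℤ := g d (M+1) - 1 with hx
  have hqx : ∀ n, x ≤ q n := fun n => by
    have := g_le_pm d (M+1) n; simp only [hx, hq]; omega
  have hsum3 : ∀ n : Fin d → ℤ, Summable (fun m : ℕ => (3:ℝ)^(-(pm d (m+M+1) n))) :=
    fun n => (summable_nat_add_iff (f := fun m : ℕ => (3:ℝ)^(-(pm d (m+1) n))) M).2
      (summable_hpot_term d n)
  have hgeo : Summable (fun m : ℕ => (1/3:ℝ)^m) :=
    summable_geometric_of_lt_one (by norm_num) (by norm_num)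
  have htsumgeo : ∑' m : ℕ, (1/3:ℝ)^m = 3/2 := by
    rw [tsum_geometric_of_lt_one (by norm_num) (by norm_num)]; norm_num
  have hTle : ∀ n, T n ≤ (3:ℝ)^(-(q n)) * (3/2) := by
    intro n
    have hrhs : Summable (fun m : ℕ => (3:ℝ)^(-(q n)) * (1/3:ℝ)^m) := hgeo.mul_left _
    have hterm : ∀ m : ℕ, (3:ℝ)^(-(pm d (m+M+1) n)) ≤ (3:ℝ)^(-(q n)) * (1/3:ℝ)^m := by
      intro m
      have h1 := pm_add_le d (M+1) n m
      rw [show M+1+m = m+M+1 from by omega] at h1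
      calc (3:ℝ)^(-(pm d (m+M+1) n)) ≤ (3:ℝ)^(-(q n + m)) := zpow3_le (by simp only [hq]; omega)
        _ = (3:ℝ)^(-(q n)) * (1/3:ℝ)^m := by
            rw [← zpow3_neg_nat, ← zpow_add₀ (by norm_num : (3:ℝ) ≠ 0)]
            congr 1; ring
    calc T n ≤ ∑' m : ℕ, (3:ℝ)^(-(q n)) * (1/3:ℝ)^m :=
          Summable.tsum_le_tsum hterm (hsum3 n) hrhs
      _ = (3:ℝ)^(-(q n)) * (3/2) := by rw [tsum_mul_left, htsumgeo]
  set en : (Fin d → ℤ) → ℕ := fun n => (q n - x).toNat with hen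
  have heninj : ∀ n ∈ B, ∀ n' ∈ B, en n = en n' → n = n' := by
    intro n hn n' hn' h
    have h1 := hqx n; have h2 := hqx n'
    have hq' : q n = q n' := by
      rw [hen] at h; simp only [] at h; omega
    exact pm_inj (show M ≤ M+1 by omega) a ((hmemB n).1 hn) ((hmemB n').1 hn') hq'
  have hsumq : ∑ n ∈ B, (3:ℝ)^(-(q n)) ≤ (3:ℝ)^(-x) * (3/2) := by
    have hterm : ∀ n ∈ B, (3:ℝ)^(-(q n)) = (3:ℝ)^(-x) * (1/3:ℝ)^(en n) := by
      intro n _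
      have h1 := hqx n
      have het : ((en n : ℤ)) = q n - x := by
        rw [hen]; exact Int.toNat_of_nonneg (by omega)
      rw [← zpow3_neg_nat, ← zpow_add₀ (by norm_num : (3:ℝ) ≠ 0), het]
      congr 1; ring
    rw [Finset.sum_congr rfl hterm, ← Finset.mul_sum]
    have himg : ∑ n ∈ B, (1/3:ℝ)^(en n) = ∑ i ∈ B.image en, (1/3:ℝ)^i :=
      (Finset.sum_image (fun n hn n' hn' h => heninj n hn n' hn' h)).symm
    have hle2 : ∑ i ∈ B.image en, (1/3:ℝ)^i ≤ ∑' i : ℕ, (1/3:ℝ)^i :=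
      Summable.sum_le_tsum _ (fun i _ => by positivity) hgeo
    rw [himg]
    have h3 : (0:ℝ) < (3:ℝ)^(-x) := by positivity
    rw [htsumgeo] at hle2
    nlinarith
  have hEabs : |E| ≤ (9/4) * (3:ℝ)^(-x) := by
    have hTnn : ∀ n, 0 ≤ T n := fun n => tsum_nonneg (fun m => by positivity)
    have h1 : |E| ≤ ∑ n ∈ B, |(σ n : ℝ) * T n| := Finset.abs_sum_le_sum_abs _ _
    have h2 : ∀ n ∈ B, |(σ n : ℝ) * T n| ≤ T n := by
      intro n _
      rw [abs_mul, abs_of_nonneg (hTnn n)]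
      have : |(σ n : ℝ)| ≤ 1 := by
        rcases hσval n with h | h | h <;> rw [h] <;> norm_num
      nlinarith [hTnn n]
    have h3 : ∑ n ∈ B, T n ≤ ∑ n ∈ B, (3:ℝ)^(-(q n)) * (3/2) :=
      Finset.sum_le_sum (fun n _ => hTle n)
    have h4 : ∑ n ∈ B, (3:ℝ)^(-(q n)) * (3/2) = (∑ n ∈ B, (3:ℝ)^(-(q n))) * (3/2) :=
      (Finset.sum_mul _ _ _).symm
    have h5 := Finset.sum_le_sum h2
    have h6 : (0:ℝ) ≤ (3:ℝ)^(-x) := by positivity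
    calc |E| ≤ ∑ n ∈ B, |(σ n : ℝ) * T n| := h1
      _ ≤ ∑ n ∈ B, T n := h5
      _ ≤ (∑ n ∈ B, (3:ℝ)^(-(q n))) * (3/2) := by rw [← h4]; exact h3
      _ ≤ ((3:ℝ)^(-x) * (3/2)) * (3/2) := by nlinarith [hsumq]
      _ = (9/4) * (3:ℝ)^(-x) := by ring
  -- final assembly
  have hp1x : p1 ≤ x - 1 := by
    have h1 := pm_le d M nstar
    have h2 := g_succ d M
    rw [hx, hp1]
    omega
  have hxy : x ≤ 2^(d*M+1) - 1 := by
    have := g_le_pow d hd M hM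
    rw [hx]
    omega
  have habs_lower : |A| - |E| ≤ |A + E| := by
    have h1 : |A| ≤ |A + E| + |E| := by
      calc |A| = |(A + E) + (-E)| := by ring_nf
        _ ≤ |A + E| + |-E| := abs_add_le _ _
        _ = |A + E| + |E| := by rw [abs_neg]
    linarith
  have hmono1 : (3:ℝ) * (3:ℝ)^(-x) ≤ (3:ℝ)^(-p1) := by
    have : (3:ℝ)^(-(x-1)) ≤ (3:ℝ)^(-p1) := zpow3_le hp1x
    have heq : (3:ℝ)^(-(x-1)) = 3 * (3:ℝ)^(-x) := by
      rw [show -(x-1) = 1 + -x by ring, zpow_add₀ (by norm_num : (3:ℝ) ≠ 0)]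
      norm_num
    linarith [heq ▸ this]
  have hmono2 : (3:ℝ) * (3:ℝ)^(-(2^(d*M+1) : ℤ)) ≤ (3:ℝ)^(-x) := by
    have : (3:ℝ)^(-(2^(d*M+1) - 1 : ℤ)) ≤ (3:ℝ)^(-x) := zpow3_le hxy
    have heq : (3:ℝ)^(-(2^(d*M+1) - 1 : ℤ)) = 3 * (3:ℝ)^(-(2^(d*M+1) : ℤ)) := by
      rw [show -((2:ℤ)^(d*M+1) - 1) = 1 + -(2^(d*M+1) : ℤ) by ring,
        zpow_add₀ (by norm_num : (3:ℝ) ≠ 0)]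
      norm_num
    linarith [heq ▸ this]
  rw [hSAE]
  have hpos : (0:ℝ) < (3:ℝ)^(-(2^(d*M+1) : ℤ)) := by positivity
  have hxpos : (0:ℝ) < (3:ℝ)^(-x) := by positivity
  calc (3:ℝ)^(-(2^(d*M+1) : ℤ)) ≤ (3/4) * (3:ℝ)^(-x) := by nlinarith
    _ ≤ (3:ℝ)^(-p1) - (9/4) * (3:ℝ)^(-x) := by nlinarith
    _ ≤ |A| - |E| := by linarith [hAabs, hEabs]
    _ ≤ |A + E| := habs_lower
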